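/- Let X be a connected, first countable, locally path connected, Hausdorff topological space and let U ⊆ X be a portly subset (open, dense, locally connected in X). Then for all a ∈ U and b ∈ X there exists a path γ : [0,1] → X from a to b with γ([0,1)) ⊆ U. -/

import Mathlib

open Set Filter Topology


/-- A subset `U` of a topological space `X` is *portly* if it is open, dense, and
locally connected in `X`, i.e. its intersection with every open connected subset
of `X` is connected. -/
def Portly (X : Type*) [TopologicalSpace X] (U : Set X) : Prop :=
  IsOpen U ∧ Dense U ∧ ∀ W : Set X, IsOpen W → IsConnected W → IsConnected (W ∩ U)

theorem stmt6 {X : Type*} [TopologicalSpace X] [ConnectedSpace X]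
    [FirstCountableTopology X] [LocallyPathConnectedSpace X] [T2Space X]
    (U : Set X) (hU : Portly X U) (a : X) (ha : a ∈ U) (b : X) :
    ∃ γ : Path a b, ∀ t : unitInterval, t ≠ 1 → γ t ∈ U := by
  obtain ⟨hUopen, hUdense, hUconn⟩ := hU
  have hUc : IsConnected U := by
    have := hUconn Set.univ isOpen_univ isConnected_univ
    rwa [Set.univ_inter] at this
  have hUpc : IsPathConnected U := hUopen.isConnected_iff_isPathConnected.mp hUc
  obtain ⟨u, hu⟩ := (𝓝 b).exists_antitone_basis
  have humem : ∀ n, u n ∈ 𝓝 b := fun n => hu.1.mem_of_mem trivial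
  set V : ℕ → Set X := fun n => pathComponentIn (interior (u n)) b with hVdef
  have hbint : ∀ n, b ∈ interior (u n) := fun n => mem_interior_iff_mem_nhds.mpr (humem n)
  have hbV : ∀ n, b ∈ V n := fun n => mem_pathComponentIn_self (hbint n)
  have hVopen : ∀ n, IsOpen (V n) := fun n => isOpen_interior.pathComponentIn _
  have hVpc : ∀ n, IsPathConnected (V n) := fun n => isPathConnected_pathComponentIn (hbint n)
  have hVanti : ∀ m n, m ≤ n → V n ⊆ V m := fun m n h =>
    pathComponentIn_mono (interior_mono (hu.2 h))
  have hVsub : ∀ n, V n ⊆ u n := fun n =>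
    Set.Subset.trans pathComponentIn_subset interior_subset
  set S : ℕ → Set X := fun n => V n ∩ U with hSdef
  have hSne : ∀ n, (S n).Nonempty := fun n =>
    hUdense.inter_open_nonempty _ (hVopen n) ⟨b, hbV n⟩
  have hSpc : ∀ n, IsPathConnected (S n) := fun n =>
    ((hVopen n).inter hUopen).isConnected_iff_isPathConnected.mp
      (hUconn _ (hVopen n) (hVpc n).isConnected)
  have hSanti : ∀ m n, m ≤ n → S n ⊆ S m := fun m n h =>
    Set.inter_subset_inter_left _ (hVanti m n h)
  have hSsubU : ∀ n, S n ⊆ U := fun n => Set.inter_subset_right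
  have hSsubV : ∀ n, S n ⊆ V n := fun n => Set.inter_subset_left
  choose x hx using hSne
  have hJ0 : JoinedIn U a (x 0) := hUpc.joinedIn a ha (x 0) (hSsubU 0 (hx 0))
  have hJ : ∀ n, JoinedIn (S n) (x n) (x (n + 1)) := fun n =>
    (hSpc n).joinedIn _ (hx n) _ (hSanti n (n + 1) (Nat.le_succ n) (hx (n + 1)))
  -- the pieces, as maps ℝ → X
  set c : ℕ → ℝ → X := fun n =>
    Nat.casesOn n (fun s => hJ0.somePath (Set.projIcc 0 1 zero_le_one s))
      (fun m s => (hJ m).somePath (Set.projIcc 0 1 zero_le_one s)) with hcdef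
  have hccont : ∀ n, Continuous (c n) := by
    rintro (_ | n) <;> exact (Path.continuous _).comp continuous_projIcc
  have hcU : ∀ n s, c n s ∈ U := by
    rintro (_ | n) s
    · exact hJ0.somePath_mem _
    · exact hSsubU n ((hJ n).somePath_mem _)
  have hcS : ∀ n s, c (n + 1) s ∈ S n := fun n s => (hJ n).somePath_mem _
  have hc00 : c 0 0 = a := by simp [hcdef, Set.projIcc_left]
  have hcglue : ∀ n, c n 1 = c (n + 1) 0 := by
    rintro (_ | n) <;> simp [hcdef, Set.projIcc_left, Set.projIcc_right]
  -- infinite concatenation on [0, ∞)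
  set H : ℝ → X := fun s => c ⌊s⌋₊ (s - ⌊s⌋₊) with hHdef
  have hH1 : ∀ s : ℝ, s < 1 → H s = c 0 s := by
    intro s hs
    have h0 : ⌊s⌋₊ = 0 := Nat.floor_eq_zero.mpr hs
    simp [hHdef, h0]
  have hHn : ∀ n : ℕ, ∀ s ∈ Set.Ico (n : ℝ) (n + 1), H s = c n (s - n) := by
    intro n s hs
    have h0 : ⌊s⌋₊ = n := Nat.floor_eq_on_Ico n s hs
    simp [hHdef, h0]
  have hHcont : Continuous H := by
    rw [continuous_iff_continuousAt]
    intro s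
    rcases lt_or_ge s 1 with hs | hs
    · refine ((hccont 0).continuousAt).congr ?_
      filter_upwards [Iio_mem_nhds hs] with y hy
      exact (hH1 y hy).symm
    · set n := ⌊s⌋₊ with hn
      have hn1 : 1 ≤ n := Nat.le_floor (by exact_mod_cast hs)
      have hns : (n : ℝ) ≤ s := Nat.floor_le (le_trans zero_le_one hs)
      have hsn : s < n + 1 := Nat.lt_floor_add_one s
      have hcast : ((n - 1 : ℕ) : ℝ) = (n : ℝ) - 1 := by
        push_cast [Nat.cast_sub hn1]; ring
      have hsucc : (n - 1) + 1 = n := Nat.succ_pred_eq_of_pos hn1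
      rcases eq_or_lt_of_le hns with he | hlt
      · -- junction point s = n
        have hD : Continuous fun y : ℝ =>
            if y ≤ (n : ℝ) then c (n - 1) (y - (n - 1 : ℕ)) else c n (y - n) := by
          refine Continuous.if_le ?_ ?_ continuous_id continuous_const ?_
          · exact (hccont _).comp (continuous_id.sub continuous_const)
          · exact (hccont _).comp (continuous_id.sub continuous_const)
          · intro y hy
            rw [hy, hcast]
            have : (n : ℝ) - ((n : ℝ) - 1) = 1 := by ring
            rw [this, hcglue (n - 1), hsucc, sub_self]
      -- now transfer
        refine hD.continuousAt.congr ?_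
        have hmem : Set.Ioo ((n : ℝ) - 1) ((n : ℝ) + 1) ∈ 𝓝 s := by
          refine Ioo_mem_nhds ?_ ?_ <;> rw [← he] <;> [linarith; linarith]
        filter_upwards [hmem] with y hy
        rcases le_or_gt y (n : ℝ) with h | h
        · rcases eq_or_lt_of_le h with rfl | h'
          · rw [if_pos le_rfl, hcast]
            have h1 : (n : ℝ) - ((n : ℝ) - 1) = 1 := by ring
            rw [h1, hcglue (n - 1), hsucc]
            have := hHn n (n : ℝ) ⟨le_rfl, by linarith⟩
            rw [this, sub_self]
          · rw [if_pos h]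
            have : H y = c (n - 1) (y - (n - 1 : ℕ)) := by
              refine hHn (n - 1) y ⟨?_, ?_⟩ <;> rw [hcast] <;>
                [exact le_of_lt hy.1; linarith]
            rw [this]
        · rw [if_neg (not_le.mpr h)]
          exact (hHn n y ⟨le_of_lt h, hy.2⟩).symm
      · -- interior point n < s < n + 1
        have hc' : Continuous fun y : ℝ => c n (y - (n : ℝ)) :=
          (hccont n).comp (continuous_id.sub continuous_const)
        refine hc'.continuousAt.congr ?_
        filter_upwards [Ioo_mem_nhds hlt hsn] with y hy
        exact (hHn n y ⟨le_of_lt hy.1, hy.2⟩).symm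
  -- the full path as map ℝ → X
  set G : ℝ → X := fun t => if t < 1 then H (t / (1 - t)) else b with hGdef
  have hG1 : G 1 = b := if_neg (lt_irrefl 1)
  have hG0 : G 0 = a := by
    rw [hGdef]
    simp only [if_pos one_pos, zero_div]
    rw [hH1 0 one_pos, hc00]
  have hGU : ∀ t : ℝ, t < 1 → G t ∈ U := by
    intro t ht
    rw [hGdef]
    simp only [if_pos ht]
    exact hcU _ _
  have hGcont : Continuous G := by
    rw [continuous_iff_continuousAt]
    intro t
    rcases lt_trichotomy t 1 with ht | rfl | ht
    · have hct : ContinuousAt (fun t : ℝ => H (t / (1 - t))) t := by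
        refine hHcont.continuousAt.comp ?_
        exact continuousAt_id.div (continuousAt_const.sub continuousAt_id)
          (ne_of_gt (show (0:ℝ) < 1 - t by linarith))
      refine hct.congr ?_
      filter_upwards [Iio_mem_nhds ht] with y hy
      exact (if_pos hy).symm
    · -- continuity at 1
      rw [ContinuousAt, hG1, Filter.tendsto_def]
      intro N hN
      obtain ⟨n, -, hn⟩ := hu.1.mem_iff.mp hN
      have hθ : (1 : ℝ) - 1 / (n + 2) < 1 := by
        have : (0 : ℝ) < 1 / (n + 2) := by positivity
        linarith
      refine mem_of_superset (Ioi_mem_nhds hθ) ?_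
      intro t ht
      simp only [Set.mem_preimage]
      by_cases h1 : t < 1
      · have h1t : (0 : ℝ) < 1 - t := by linarith
        have hn2 : (0 : ℝ) < (n : ℝ) + 2 := by positivity
        have key : ((n : ℝ) + 1) < t / (1 - t) := by
          rw [lt_div_iff₀ h1t]
          have h2 : ((n : ℝ) + 2) * (1 - t) < 1 := by
            have : (1 : ℝ) - t < 1 / (n + 2) := by
              simp only [Set.mem_Ioi] at ht; linarith
            calc ((n : ℝ) + 2) * (1 - t) < ((n : ℝ) + 2) * (1 / (n + 2)) := by
                  exact mul_lt_mul_of_pos_left this hn2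
              _ = 1 := by field_simp
          nlinarith
        set s := t / (1 - t) with hsdef
        have hfl : n + 1 ≤ ⌊s⌋₊ := Nat.le_floor (by push_cast; linarith)
        obtain ⟨k, hk⟩ : ∃ k, ⌊s⌋₊ = k + 1 := ⟨⌊s⌋₊ - 1, by omega⟩
        have hkn : n ≤ k := by omega
        have hGt : G t = c ⌊s⌋₊ (s - ⌊s⌋₊) := by
          simp only [hGdef, if_pos h1]; rfl
        rw [hGt, hk]
        exact hn (hVsub n (hVanti n k hkn (hSsubV k (hcS k _))))
      · have : G t = b := if_neg h1
        rw [this]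
        exact mem_of_mem_nhds hN
    · refine (continuousAt_const (y := b)).congr ?_
      filter_upwards [Ioi_mem_nhds ht] with y hy
      exact (if_neg (not_lt.mpr (le_of_lt hy))).symm
  refine ⟨{ toFun := fun t => G t,
            continuous_toFun := hGcont.comp continuous_subtype_val,
            source' := hG0, target' := hG1 }, ?_⟩
  intro t ht
  have htlt : (t : ℝ) < 1 := by
    rcases lt_or_eq_of_le t.2.2 with h | h
    · exact h
    · exact absurd (Subtype.ext h) ht
  exact hGU t htlt
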